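/- arXiv:1206.0127 — 2 statements merged into one kernel-verified Lean document; each statement's English description precedes it below -/
import Mathlib

section
/- Let I be a compact interval in ℝ and f : I → I a continuous map. If there exist a fixed point z of f and a point c ∈ I with c ≠ z such that (f(c) − z)/(c − z) > 1 and z belongs to the ω-limit set ω_f(c), then f is turbulent on I and has periodic points of all periods m ≥ 1. -/
open Filter Set Function

/-- `J` is a compact subinterval of `I`. -/
def IsCompactSubinterval (J I : Set ℝ) : Prop :=
  J ⊆ I ∧ ∃ p q : ℝ, p ≤ q ∧ J = Set.Icc p q

/-- `g` is turbulent on the compact interval `J`: there are compact subintervals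
`J₀`, `J₁` of `J` with at most one point in common with `g(J₀) ∩ g(J₁) ⊇ J₀ ∪ J₁`. -/
def TurbulentOn (g : ℝ → ℝ) (J : Set ℝ) : Prop :=
  ∃ J₀ J₁ : Set ℝ, IsCompactSubinterval J₀ J ∧ IsCompactSubinterval J₁ J ∧
    (J₀ ∩ J₁).Subsingleton ∧ J₀ ∪ J₁ ⊆ g '' J₀ ∩ g '' J₁

/-- `g` is doubly turbulent on `I`: it is turbulent on two compact subintervals
of `I` having at most one point in common. -/
def DoublyTurbulentOn (g : ℝ → ℝ) (I : Set ℝ) : Prop :=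
  ∃ K L : Set ℝ, IsCompactSubinterval K I ∧ IsCompactSubinterval L I ∧
    (K ∩ L).Subsingleton ∧ TurbulentOn g K ∧ TurbulentOn g L

/-- `y` is a periodic point of `f` of (least) period `m`. -/
def PeriodicPtOfPeriod (f : ℝ → ℝ) (m : ℕ) (y : ℝ) : Prop :=
  f^[m] y = y ∧ ∀ j : ℕ, 0 < j → j < m → f^[j] y ≠ y

/-- `x` is a chain recurrent point of `f : I → I`. -/
def ChainRecurrentPt (f : ℝ → ℝ) (I : Set ℝ) (x : ℝ) : Prop :=
  x ∈ I ∧ ∀ ε : ℝ, 0 < ε → ∃ n : ℕ, 1 ≤ n ∧ ∃ xs : ℕ → ℝ,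
    (∀ i ≤ n, xs i ∈ I) ∧ xs 0 = x ∧ xs n = x ∧ ∀ i < n, |f (xs i) - xs (i + 1)| < ε

/-- `z` belongs to the ω-limit set of `c` under `f`, i.e. `z` is a limit point of
the sequence `(f^[n] c)`. -/
def OmegaLimitPt (f : ℝ → ℝ) (c z : ℝ) : Prop :=
  ∃ φ : ℕ → ℕ, StrictMono φ ∧ Filter.Tendsto (fun i => f^[φ i] c) Filter.atTop (nhds z)

/-- The sets `K` and `L` lie on opposite sides of the point `z`. -/
def OppositeSides (K L : Set ℝ) (z : ℝ) : Prop :=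
  ((∀ x ∈ K, x < z) ∧ (∀ y ∈ L, z < y)) ∨ ((∀ x ∈ K, z < x) ∧ (∀ y ∈ L, y < z))

private lemma isClosed_inter_fiber {f : ℝ → ℝ} {s t : Set ℝ} (hs : IsClosed s)
    (hf : ContinuousOn f s) (ht : IsClosed t) : IsClosed (s ∩ f ⁻¹' t) :=
  hf.preimage_isClosed_of_isClosed hs ht

private lemma exact_cover_le {f : ℝ → ℝ} {α β γ δ s t : ℝ}
    (hf : ContinuousOn f (Icc α β)) (hs : s ∈ Icc α β) (ht : t ∈ Icc α β)
    (hst : s ≤ t) (hfs : f s = γ) (hft : f t = δ) (hgd : γ ≤ δ) :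
    ∃ u v, s ≤ u ∧ u ≤ v ∧ v ≤ t ∧ f '' Icc u v = Icc γ δ := by
  have hsub1 : Icc s t ⊆ Icc α β := Icc_subset_Icc hs.1 ht.2
  set A : Set ℝ := Icc s t ∩ f ⁻¹' {γ} with hA
  have hAclosed : IsClosed A :=
    isClosed_inter_fiber isClosed_Icc (hf.mono hsub1) isClosed_singleton
  have hAne : A.Nonempty := ⟨s, ⟨le_rfl, hst⟩, hfs⟩
  have hAbdd : BddAbove A := ⟨t, fun x hx => hx.1.2⟩
  set u := sSup A with hu
  have huA : u ∈ A := hAclosed.csSup_mem hAne hAbdd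
  have hfu : f u = γ := huA.2
  set B : Set ℝ := Icc u t ∩ f ⁻¹' {δ} with hB
  have hsub2 : Icc u t ⊆ Icc α β := Icc_subset_Icc (hsub1 huA.1).1 ht.2
  have hBclosed : IsClosed B :=
    isClosed_inter_fiber isClosed_Icc (hf.mono hsub2) isClosed_singleton
  have hBne : B.Nonempty := ⟨t, ⟨huA.1.2, le_rfl⟩, hft⟩
  have hBbdd : BddBelow B := ⟨u, fun x hx => hx.1.1⟩
  set v := sInf B with hv
  have hvB : v ∈ B := hBclosed.csInf_mem hBne hBbdd
  have hfv : f v = δ := hvB.2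
  have huv : u ≤ v := hvB.1.1
  have hvt : v ≤ t := hvB.1.2
  have hsu : s ≤ u := huA.1.1
  refine ⟨u, v, hsu, huv, hvt, ?_⟩
  have hsubuv : Icc u v ⊆ Icc α β := Icc_subset_Icc (hsub1 huA.1).1 (hsub2 hvB.1).2
  have hcont : ContinuousOn f (Icc u v) := hf.mono hsubuv
  apply Subset.antisymm
  · rintro y ⟨x, hx, rfl⟩
    constructor
    · by_contra h
      push_neg at h
      have hxu : u < x := by
        rcases eq_or_lt_of_le hx.1 with h' | h'
        · exfalso; rw [← h', hfu] at h; exact absurd h (lt_irrefl γ)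
        · exact h'
      have hmem : γ ∈ Icc (f x) (f v) := ⟨le_of_lt h, by rw [hfv]; exact hgd⟩
      obtain ⟨w, hw, hfw⟩ :=
        intermediate_value_Icc hx.2 (hcont.mono (Icc_subset_Icc hx.1 le_rfl)) hmem
      have hwA : w ∈ A :=
        ⟨⟨le_trans hsu (le_trans (le_of_lt hxu) hw.1), le_trans hw.2 hvt⟩, hfw⟩
      have hwle : w ≤ u := le_csSup hAbdd hwA
      linarith [hw.1]
    · by_contra h
      push_neg at h
      have hxv : x < v := by
        rcases eq_or_lt_of_le hx.2 with h' | h'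
        · exfalso; rw [h', hfv] at h; exact absurd h (lt_irrefl δ)
        · exact h'
      have hmem : δ ∈ Icc (f u) (f x) := ⟨by rw [hfu]; exact hgd, le_of_lt h⟩
      obtain ⟨w, hw, hfw⟩ :=
        intermediate_value_Icc hx.1 (hcont.mono (Icc_subset_Icc le_rfl hx.2)) hmem
      have hwB : w ∈ B := ⟨⟨hw.1, le_trans (le_trans hw.2 hx.2) hvt⟩, hfw⟩
      have hwge : v ≤ w := csInf_le hBbdd hwB
      linarith [hw.2]
  · have him := intermediate_value_Icc huv hcont
    rw [hfu, hfv] at him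
    exact him

private lemma exact_cover_ge {f : ℝ → ℝ} {α β γ δ s t : ℝ}
    (hf : ContinuousOn f (Icc α β)) (hs : s ∈ Icc α β) (ht : t ∈ Icc α β)
    (hts : t ≤ s) (hfs : f s = γ) (hft : f t = δ) (hgd : γ ≤ δ) :
    ∃ u v, t ≤ u ∧ u ≤ v ∧ v ≤ s ∧ f '' Icc u v = Icc γ δ := by
  have hsub1 : Icc t s ⊆ Icc α β := Icc_subset_Icc ht.1 hs.2
  set B : Set ℝ := Icc t s ∩ f ⁻¹' {δ} with hB
  have hBclosed : IsClosed B :=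
    isClosed_inter_fiber isClosed_Icc (hf.mono hsub1) isClosed_singleton
  have hBne : B.Nonempty := ⟨t, ⟨le_rfl, hts⟩, hft⟩
  have hBbdd : BddAbove B := ⟨s, fun x hx => hx.1.2⟩
  set u := sSup B with hu
  have huB : u ∈ B := hBclosed.csSup_mem hBne hBbdd
  have hfu : f u = δ := huB.2
  set A : Set ℝ := Icc u s ∩ f ⁻¹' {γ} with hA
  have hsub2 : Icc u s ⊆ Icc α β := Icc_subset_Icc (hsub1 huB.1).1 hs.2
  have hAclosed : IsClosed A :=
    isClosed_inter_fiber isClosed_Icc (hf.mono hsub2) isClosed_singleton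
  have hAne : A.Nonempty := ⟨s, ⟨huB.1.2, le_rfl⟩, hfs⟩
  have hAbdd : BddBelow A := ⟨u, fun x hx => hx.1.1⟩
  set v := sInf A with hv
  have hvA : v ∈ A := hAclosed.csInf_mem hAne hAbdd
  have hfv : f v = γ := hvA.2
  have huv : u ≤ v := hvA.1.1
  have hvs : v ≤ s := hvA.1.2
  have htu : t ≤ u := huB.1.1
  refine ⟨u, v, htu, huv, hvs, ?_⟩
  have hsubuv : Icc u v ⊆ Icc α β := Icc_subset_Icc (hsub1 huB.1).1 (hsub2 hvA.1).2
  have hcont : ContinuousOn f (Icc u v) := hf.mono hsubuv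
  apply Subset.antisymm
  · rintro y ⟨x, hx, rfl⟩
    constructor
    · by_contra h
      push_neg at h
      have hxv : x < v := by
        rcases eq_or_lt_of_le hx.2 with h' | h'
        · exfalso; rw [h', hfv] at h; exact absurd h (lt_irrefl γ)
        · exact h'
      have hmem : γ ∈ Icc (f x) (f u) := ⟨le_of_lt h, by rw [hfu]; exact hgd⟩
      obtain ⟨w, hw, hfw⟩ :=
        intermediate_value_Icc' hx.1 (hcont.mono (Icc_subset_Icc le_rfl hx.2)) hmem
      have hwA : w ∈ A := ⟨⟨hw.1, le_trans (le_trans hw.2 hx.2) hvs⟩, hfw⟩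
      have hwge : v ≤ w := csInf_le hAbdd hwA
      linarith [hw.2]
    · by_contra h
      push_neg at h
      have hxu : u < x := by
        rcases eq_or_lt_of_le hx.1 with h' | h'
        · exfalso; rw [← h', hfu] at h; exact absurd h (lt_irrefl δ)
        · exact h'
      have hmem : δ ∈ Icc (f v) (f x) := ⟨by rw [hfv]; exact hgd, le_of_lt h⟩
      obtain ⟨w, hw, hfw⟩ :=
        intermediate_value_Icc' hx.2 (hcont.mono (Icc_subset_Icc hx.1 le_rfl)) hmem
      have hwB : w ∈ B :=
        ⟨⟨le_trans htu (le_trans (le_of_lt hxu) hw.1), le_trans hw.2 hvs⟩, hfw⟩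
      have hwle : w ≤ u := le_csSup hBbdd hwB
      linarith [hw.1]
  · have him := intermediate_value_Icc' huv hcont
    rw [hfu, hfv] at him
    exact him

private lemma exact_cover {f : ℝ → ℝ} {α β γ δ : ℝ}
    (hf : ContinuousOn f (Icc α β)) (hgd : γ ≤ δ)
    (hsub : Icc γ δ ⊆ f '' Icc α β) :
    ∃ u v, u ∈ Icc α β ∧ v ∈ Icc α β ∧ u ≤ v ∧ f '' Icc u v = Icc γ δ := by
  obtain ⟨s, hs, hfs⟩ := hsub (left_mem_Icc.mpr hgd)
  obtain ⟨t, ht, hft⟩ := hsub (right_mem_Icc.mpr hgd)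
  rcases le_total s t with h | h
  · obtain ⟨u, v, h1, h2, h3, h4⟩ := exact_cover_le hf hs ht h hfs hft hgd
    exact ⟨u, v, ⟨le_trans hs.1 h1, le_trans (le_trans h2 h3) ht.2⟩,
      ⟨le_trans hs.1 (le_trans h1 h2), le_trans h3 ht.2⟩, h2, h4⟩
  · obtain ⟨u, v, h1, h2, h3, h4⟩ := exact_cover_ge hf hs ht h hfs hft hgd
    exact ⟨u, v, ⟨le_trans ht.1 h1, le_trans (le_trans h2 h3) hs.2⟩,
      ⟨le_trans ht.1 (le_trans h1 h2), le_trans h3 hs.2⟩, h2, h4⟩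

private lemma exists_fixed_point {g : ℝ → ℝ} {α β : ℝ} (hab : α ≤ β)
    (hg : ContinuousOn g (Icc α β)) (hsub : Icc α β ⊆ g '' Icc α β) :
    ∃ y ∈ Icc α β, g y = y := by
  obtain ⟨s, hs, hfs⟩ := hsub (left_mem_Icc.mpr hab)
  obtain ⟨t, ht, hft⟩ := hsub (right_mem_Icc.mpr hab)
  have husub : uIcc s t ⊆ Icc α β := by
    rw [uIcc_eq_union]
    exact union_subset (Icc_subset_Icc hs.1 ht.2) (Icc_subset_Icc ht.1 hs.2)
  have hcont : ContinuousOn (fun x => g x - x) (uIcc s t) :=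
    ((hg.mono husub).sub continuousOn_id)
  have h0 : (0:ℝ) ∈ uIcc (g s - s) (g t - t) := by
    rw [mem_uIcc]
    left
    constructor
    · rw [hfs]; linarith [hs.1]
    · rw [hft]; linarith [ht.2]
  obtain ⟨y, hy, hgy⟩ := intermediate_value_uIcc hcont h0
  exact ⟨y, husub hy, by dsimp at hgy; linarith⟩

private lemma image_iterate_succ (f : ℝ → ℝ) (n : ℕ) (s : Set ℝ) :
    f^[n+1] '' s = f^[n] '' (f '' s) := by
  rw [Function.iterate_succ, Set.image_comp]

private lemma contOn_iterate {f : ℝ → ℝ} {s t : Set ℝ} (hf : ContinuousOn f t) :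
    ∀ k, (∀ i, i < k → f^[i] '' s ⊆ t) → ContinuousOn f^[k] s := by
  intro k
  induction k with
  | zero => intro _; simpa using continuousOn_id
  | succ k ih =>
    intro h
    rw [Function.iterate_succ']
    refine ContinuousOn.comp hf (ih fun i hi => h i (by omega)) ?_
    exact Set.mapsTo_iff_image_subset.mpr (h k (by omega))



private lemma visits {f : ℝ → ℝ} {c z : ℝ} (hzc : z < c)
    (hgt : ∀ n, z < f^[n] c)
    (hfid : ∀ x, z < x → x ≤ c → x < f x)
    (hacc : ∀ ε, 0 < ε → ∀ N, ∃ n, N ≤ n ∧ f^[n] c < z + ε) :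
    ∀ ε, 0 < ε → ∃ k, c < f^[k] c ∧ f (f^[k] c) < z + ε := by
  intro ε hε
  set x : ℕ → ℝ := fun n => f^[n] c with hxdef
  have hε2 : (0:ℝ) < min ε (c - z) := lt_min hε (by linarith)
  obtain ⟨n, -, hn⟩ := hacc _ hε2 0
  have hxn : x n < z + min ε (c - z) := hn
  obtain ⟨m, hm, hm2⟩ := hacc (x n - z) (by linarith [hgt n]) (n+1)
  have hxm : x m < x n := by have : x m < z + (x n - z) := hm2; linarith
  set S := (Finset.Icc n m).filter (fun j => x n ≤ x j) with hS
  have hnS : n ∈ S := Finset.mem_filter.mpr ⟨Finset.mem_Icc.mpr ⟨le_rfl, by omega⟩, le_rfl⟩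
  have hSne : S.Nonempty := ⟨n, hnS⟩
  set k := S.max' hSne with hk
  have hkS : k ∈ S := S.max'_mem hSne
  have hxk : x n ≤ x k := (Finset.mem_filter.mp hkS).2
  have hkIcc := Finset.mem_Icc.mp (Finset.mem_filter.mp hkS).1
  have hkm : k < m := by
    rcases eq_or_lt_of_le hkIcc.2 with h | h
    · exfalso; rw [h] at hxk; linarith
    · exact h
  have hk1 : x (k+1) < x n := by
    by_contra h
    push_neg at h
    have hmem : k + 1 ∈ S :=
      Finset.mem_filter.mpr ⟨Finset.mem_Icc.mpr ⟨by omega, by omega⟩, h⟩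
    have := S.le_max' _ hmem
    omega
  have hfxk : f (x k) = x (k+1) := (Function.iterate_succ_apply' f k c).symm
  have hck : c < x k := by
    by_contra h
    push_neg at h
    have h2 := hfid (x k) (hgt k) h
    rw [hfxk] at h2
    linarith
  refine ⟨k, hck, ?_⟩
  rw [hfxk]
  have := min_le_left ε (c - z)
  linarith

private lemma core (a b : ℝ) (f : ℝ → ℝ)
    (hf : ContinuousOn f (Set.Icc a b)) (hmaps : Set.MapsTo f (Set.Icc a b) (Set.Icc a b))
    (z : ℝ) (hz : z ∈ Set.Icc a b) (hfz : f z = z)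
    (c : ℝ) (hc : c ∈ Set.Icc a b) (hzc : z < c) (hfc : c < f c)
    (homega : OmegaLimitPt f c z) :
    TurbulentOn f (Set.Icc a b) ∧
      ∀ m : ℕ, 1 ≤ m → ∃ y ∈ Set.Icc a b, PeriodicPtOfPeriod f m y := by
  -- orbit stays in [a,b]
  have horbit : ∀ n, f^[n] c ∈ Icc a b := by
    intro n
    induction n with
    | zero => simpa using hc
    | succ n ih => rw [Function.iterate_succ_apply']; exact hmaps ih
  -- accumulation at z
  have hacc : ∀ ε, 0 < ε → ∀ N, ∃ n, N ≤ n ∧ |f^[n] c - z| < ε := by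
    obtain ⟨φ, hφ, hlim⟩ := homega
    intro ε hε N
    obtain ⟨i₀, hi₀⟩ := Metric.tendsto_atTop.mp hlim ε hε
    refine ⟨φ (max i₀ N), le_trans (le_max_right i₀ N) (hφ.le_apply), ?_⟩
    have := hi₀ (max i₀ N) (le_max_left i₀ N)
    rwa [Real.dist_eq] at this
  -- the fixed point r
  have hIcc_zc : Icc z c ⊆ Icc a b := Icc_subset_Icc hz.1 hc.2
  set F : Set ℝ := Icc z c ∩ (fun x => f x - x) ⁻¹' {0} with hF
  have hFclosed : IsClosed F :=
    isClosed_inter_fiber isClosed_Icc ((hf.mono hIcc_zc).sub continuousOn_id) isClosed_singleton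
  have hFne : F.Nonempty := ⟨z, ⟨le_rfl, le_of_lt hzc⟩, by simp [hfz]⟩
  have hFbdd : BddAbove F := ⟨c, fun x hx => hx.1.2⟩
  set r := sSup F with hr
  have hrF : r ∈ F := hFclosed.csSup_mem hFne hFbdd
  have hfr : f r = r := by have := hrF.2; simp at this; linarith
  have hzr : z ≤ r := hrF.1.1
  have hrc : r < c := by
    rcases eq_or_lt_of_le hrF.1.2 with h | h
    · exfalso; rw [h] at hfr; linarith
    · exact h
  have hra : a ≤ r := le_trans hz.1 hzr
  have hfid : ∀ t, r < t → t ≤ c → t < f t := by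
    intro t h1 h2
    by_contra h
    push_neg at h
    rcases eq_or_lt_of_le h with h' | h'
    · have : t ∈ F := ⟨⟨le_trans hzr (le_of_lt h1), h2⟩, by simp [h']⟩
      have := le_csSup hFbdd this
      linarith
    · have hmem : (0:ℝ) ∈ Icc (f t - t) (f c - c) := ⟨by linarith, by linarith⟩
      have hcont : ContinuousOn (fun x => f x - x) (Icc t c) :=
        ((hf.mono (Icc_subset_Icc (le_trans hz.1 (le_trans hzr (le_of_lt h1))) hc.2)).sub
          continuousOn_id)
      obtain ⟨w, hw, hfw⟩ := intermediate_value_Icc h2 hcont hmem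
      have : w ∈ F := ⟨⟨le_trans hzr (le_trans (le_of_lt h1) hw.1), hw.2⟩, by simp [hfw]⟩
      have := le_csSup hFbdd this
      linarith [hw.1]
  -- The set S = {t ∈ [c,b] : f t ≤ r} is nonempty
  have hSne : ∃ t, t ∈ Icc c b ∧ f t ≤ r := by
    by_cases hcase : ∃ n, f^[n] c ≤ r
    · obtain ⟨N, hNspec, hmin⟩ : ∃ N, f^[N] c ≤ r ∧ ∀ M, M < N → ¬ f^[M] c ≤ r :=
        ⟨Nat.find hcase, Nat.find_spec hcase, fun M hM => Nat.find_min hcase hM⟩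
      have hN0 : N ≠ 0 := by
        intro h
        rw [h] at hNspec
        simp at hNspec
        linarith
      obtain ⟨N', rfl⟩ : ∃ N', N = N' + 1 := ⟨N - 1, by omega⟩
      have hprev : r < f^[N'] c := by
        have := hmin N' (by omega)
        push_neg at this
        exact this
      rw [Function.iterate_succ_apply' f N' c] at hNspec
      have hgtc : c < f^[N'] c := by
        by_contra h
        push_neg at h
        have h2 := hfid _ hprev h
        linarith
      exact ⟨f^[N'] c, ⟨le_of_lt hgtc, (horbit N').2⟩, hNspec⟩
    · push_neg at hcase
      have hzr' : z = r := by
        by_contra h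
        have hlt : z < r := lt_of_le_of_ne hzr h
        obtain ⟨n, -, hn⟩ := hacc (r - z) (by linarith) 0
        have h1 := abs_lt.mp hn
        have h2 := hcase n
        linarith [h1.2]
      have hacc' : ∀ ε, 0 < ε → ∀ N, ∃ n, N ≤ n ∧ f^[n] c < z + ε := by
        intro ε hε N
        obtain ⟨n, hn1, hn2⟩ := hacc ε hε N
        exact ⟨n, hn1, by linarith [(abs_lt.mp hn2).2]⟩
      have hgt : ∀ n, z < f^[n] c := by intro n; rw [hzr']; exact hcase n
      have hfid' : ∀ x, z < x → x ≤ c → x < f x := by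
        intro x h1 h2; exact hfid x (by rw [← hzr']; exact h1) h2
      have hv := visits hzc hgt hfid' hacc'
      obtain ⟨w, hw, hwmin⟩ := isCompact_Icc.exists_isMinOn (s := Icc c b)
        ⟨c, le_rfl, hc.2⟩ (hf.mono (Icc_subset_Icc hc.1 le_rfl))
      refine ⟨w, hw, ?_⟩
      by_contra h
      push_neg at h
      obtain ⟨k, hk1, hk2⟩ := hv (f w - z) (by rw [hzr']; linarith)
      have hle : f w ≤ f (f^[k] c) := hwmin ⟨le_of_lt hk1, (horbit k).2⟩
      linarith
  -- d := min of S
  obtain ⟨t₀, ht₀, hft₀⟩ := hSne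
  set S : Set ℝ := Icc c b ∩ f ⁻¹' (Iic r) with hSdef
  have hSclosed : IsClosed S :=
    isClosed_inter_fiber isClosed_Icc (hf.mono (Icc_subset_Icc hc.1 le_rfl)) isClosed_Iic
  have hSne' : S.Nonempty := ⟨t₀, ht₀, hft₀⟩
  have hSbdd : BddBelow S := ⟨c, fun x hx => hx.1.1⟩
  set d := sInf S with hd
  have hdS : d ∈ S := hSclosed.csInf_mem hSne' hSbdd
  have hd1 : d ∈ Icc c b := hdS.1
  have hd2 : f d ≤ r := hdS.2
  have hcd : c < d := by
    rcases eq_or_lt_of_le hd1.1 with h | h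
    · exfalso; rw [← h] at hd2; linarith
    · exact h
  have habove : ∀ t, c ≤ t → t < d → r < f t := by
    intro t h1 h2
    by_contra h
    push_neg at h
    have : t ∈ S := ⟨⟨h1, le_trans (le_of_lt h2) hd1.2⟩, h⟩
    have := csInf_le hSbdd this
    linarith
  have hrd : r ≤ d := le_trans (le_of_lt hrc) (le_of_lt hcd)
  have hIcc_rd : Icc r d ⊆ Icc a b := Icc_subset_Icc hra hd1.2
  -- the max point e
  obtain ⟨e, he, hemax'⟩ := isCompact_Icc.exists_isMaxOn (s := Icc r d)
    ⟨r, le_rfl, hrd⟩ (hf.mono hIcc_rd)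
  have hemax : ∀ t, t ∈ Icc r d → f t ≤ f e := fun t ht => hemax' ht
  have hM : d ≤ f e := by
    by_contra hM
    push_neg at hM
    have horb1 : ∀ n, f^[n] c ∈ Ico r d := by
      intro n
      induction n with
      | zero => simpa using ⟨le_of_lt hrc, hcd⟩
      | succ n ih =>
        rw [Function.iterate_succ_apply']
        constructor
        · rcases eq_or_lt_of_le ih.1 with h | h
          · rw [← h, hfr]
          · rcases le_or_gt (f^[n] c) c with h2 | h2
            · exact le_of_lt (lt_trans h (hfid _ h h2))
            · exact le_of_lt (habove _ (le_of_lt h2) ih.2)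
        · exact lt_of_le_of_lt (hemax _ ⟨ih.1, le_of_lt ih.2⟩) hM
    have hzr' : z = r := by
      by_contra h
      have hlt : z < r := lt_of_le_of_ne hzr h
      obtain ⟨n, -, hn⟩ := hacc (r - z) (by linarith) 0
      have h1 := abs_lt.mp hn
      have h2 := (horb1 n).1
      linarith [h1.2]
    have horb2 : ∀ n, z < f^[n] c := by
      intro n
      induction n with
      | zero => simpa using hzc
      | succ n ih =>
        rw [Function.iterate_succ_apply']
        rcases le_or_gt (f^[n] c) c with h2 | h2
        · exact lt_trans ih (hfid _ (by rw [← hzr']; exact ih) h2)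
        · rw [hzr']; exact habove _ (le_of_lt h2) (horb1 n).2
    have hacc' : ∀ ε, 0 < ε → ∀ N, ∃ n, N ≤ n ∧ f^[n] c < z + ε := by
      intro ε hε N
      obtain ⟨n, hn1, hn2⟩ := hacc ε hε N
      exact ⟨n, hn1, by linarith [(abs_lt.mp hn2).2]⟩
    have hfid' : ∀ x, z < x → x ≤ c → x < f x := by
      intro x h1 h2; exact hfid x (by rw [← hzr']; exact h1) h2
    have hv := visits hzc horb2 hfid' hacc'
    -- the min over [c, f e]
    have hcMe : c ≤ f e := le_of_lt (lt_of_lt_of_le hfc (hemax c ⟨le_of_lt hrc, le_of_lt hcd⟩))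
    have hIcc_cMe : Icc c (f e) ⊆ Icc a b :=
      Icc_subset_Icc hc.1 (le_trans (le_of_lt hM) hd1.2)
    obtain ⟨w₀, hw₀, hw₀min'⟩ := isCompact_Icc.exists_isMinOn (s := Icc c (f e))
      ⟨c, le_rfl, hcMe⟩ (hf.mono hIcc_cMe)
    have hw₀min : ∀ t, t ∈ Icc c (f e) → f w₀ ≤ f t := fun t ht => hw₀min' ht
    have hμ : r < f w₀ := habove w₀ hw₀.1 (lt_of_le_of_lt hw₀.2 hM)
    obtain ⟨k, hk1, hk2⟩ := hv (f w₀ - z) (by rw [hzr']; linarith)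
    have hk0 : k ≠ 0 := by
      intro h
      rw [h] at hk1
      simp at hk1
    obtain ⟨k', rfl⟩ : ∃ k', k = k' + 1 := ⟨k - 1, by omega⟩
    have hxk_le : f^[k' + 1] c ≤ f e := by
      rw [Function.iterate_succ_apply']
      exact hemax _ ⟨(horb1 k').1, le_of_lt (horb1 k').2⟩
    have hgem : f w₀ ≤ f (f^[k' + 1] c) := hw₀min _ ⟨le_of_lt hk1, hxk_le⟩
    linarith
  -- e is strictly interior
  have hre : r < e := by
    rcases eq_or_lt_of_le he.1 with h | h
    · exfalso; rw [← h, hfr] at hM; linarith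
    · exact h
  have hed : e < d := by
    rcases eq_or_lt_of_le he.2 with h | h
    · exfalso; rw [h] at hM; linarith
    · exact h
  have hIcc_re : Icc r e ⊆ Icc a b := Icc_subset_Icc hra (le_trans he.2 hd1.2)
  have hIcc_ed : Icc e d ⊆ Icc a b := Icc_subset_Icc (le_trans hra he.1) hd1.2
  -- coverage
  have hcov0 : Icc r d ⊆ f '' Icc r e := by
    have him := intermediate_value_Icc (le_of_lt hre) (hf.mono hIcc_re)
    refine subset_trans ?_ him
    rw [hfr]
    exact Icc_subset_Icc le_rfl hM
  have hcov1 : Icc r d ⊆ f '' Icc e d := by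
    have him := intermediate_value_Icc' (le_of_lt hed) (hf.mono hIcc_ed)
    refine subset_trans ?_ him
    exact Icc_subset_Icc hd2 hM
  have hsub_rd0 : Icc r e ⊆ Icc r d := Icc_subset_Icc le_rfl (le_of_lt hed)
  have hsub_rd1 : Icc e d ⊆ Icc r d := Icc_subset_Icc (le_of_lt hre) le_rfl
  constructor
  · refine ⟨Icc r e, Icc e d,
      ⟨hIcc_re, r, e, le_of_lt hre, rfl⟩, ⟨hIcc_ed, e, d, le_of_lt hed, rfl⟩, ?_, ?_⟩
    · intro x hx y hy
      have hx' : x = e := le_antisymm hx.1.2 hx.2.1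
      have hy' : y = e := le_antisymm hy.1.2 hy.2.1
      rw [hx', hy']
    · rintro x (hx | hx)
      · exact ⟨hcov0 (hsub_rd0 hx), hcov1 (hsub_rd0 hx)⟩
      · exact ⟨hcov0 (hsub_rd1 hx), hcov1 (hsub_rd1 hx)⟩
  · intro m hm
    rcases eq_or_lt_of_le hm with h1 | h1
    · refine ⟨z, hz, ?_, ?_⟩
      · rw [← h1]; simpa using hfz
      · intro j hj1 hj2
        rw [← h1] at hj2
        omega
    · -- m ≥ 2
      obtain ⟨m', rfl⟩ : ∃ m', m = m' + 1 := ⟨m - 1, by omega⟩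
      have hm' : 1 ≤ m' := by omega
      have chain : ∀ k : ℕ, 1 ≤ k → ∃ u v, r ≤ u ∧ u ≤ v ∧ v ≤ e ∧
          (∀ i, i < k → f^[i] '' Icc u v ⊆ Icc r e) ∧ f^[k] '' Icc u v = Icc e d := by
        intro k hk
        induction k with
        | zero => omega
        | succ k ih =>
          by_cases hk0 : k = 0
          · subst hk0
            obtain ⟨u, v, hu, hv, huv, himg⟩ := exact_cover (hf.mono hIcc_re)
              (le_of_lt hed) (subset_trans hsub_rd1 hcov0)
            refine ⟨u, v, hu.1, huv, hv.2, ?_, by simpa using himg⟩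
            intro i hi
            have : i = 0 := by omega
            subst this
            simpa using Icc_subset_Icc hu.1 hv.2
          · obtain ⟨u, v, h1', h2', h3', h4', h5'⟩ := ih (by omega)
            obtain ⟨u', v', hu', hv', huv', himg'⟩ := exact_cover (hf.mono hIcc_re)
              h2' (subset_trans (Icc_subset_Icc h1' (le_trans h3' (le_of_lt hed))) hcov0)
            refine ⟨u', v', hu'.1, huv', hv'.2, ?_, ?_⟩
            · intro i hi
              cases i with
              | zero => simpa using Icc_subset_Icc hu'.1 hv'.2
              | succ i =>
                rw [image_iterate_succ, himg']
                exact h4' i (by omega)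
            · rw [image_iterate_succ, himg']
              exact h5'
      obtain ⟨u, v, h1', h2', h3', h4', h5'⟩ := chain m' hm'
      obtain ⟨u₀, v₀, hu₀, hv₀, huv₀, himg₀⟩ := exact_cover (hf.mono hIcc_ed)
        h2' (subset_trans (Icc_subset_Icc h1' (le_trans h3' (le_of_lt hed))) hcov1)
      have hK₀sub : Icc u₀ v₀ ⊆ Icc e d := Icc_subset_Icc hu₀.1 hv₀.2
      have hfull : f^[m' + 1] '' Icc u₀ v₀ = Icc e d := by
        rw [image_iterate_succ, himg₀]
        exact h5'
      have himgs : ∀ i, i < m' + 1 → f^[i] '' Icc u₀ v₀ ⊆ Icc a b := by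
        intro i hi
        cases i with
        | zero => simpa using subset_trans hK₀sub hIcc_ed
        | succ i =>
          rw [image_iterate_succ, himg₀]
          exact subset_trans (h4' i (by omega)) hIcc_re
      have hcont_it : ContinuousOn f^[m' + 1] (Icc u₀ v₀) := contOn_iterate hf _ himgs
      obtain ⟨y, hy, hfy⟩ := exists_fixed_point huv₀ hcont_it
        (by rw [hfull]; exact hK₀sub)
      have hitin : ∀ j, 1 ≤ j → j ≤ m' → f^[j] y ∈ Icc r e := by
        intro j hj1 hj2
        obtain ⟨j', rfl⟩ : ∃ j', j = j' + 1 := ⟨j - 1, by omega⟩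
        have hmem : f^[j' + 1] y ∈ f^[j' + 1] '' Icc u₀ v₀ := mem_image_of_mem _ hy
        rw [image_iterate_succ, himg₀] at hmem
        exact h4' j' (by omega) hmem
      refine ⟨y, hIcc_ed (hK₀sub hy), hfy, ?_⟩
      intro j hj1 hj2 hjy
      have hyJ0 : y ∈ Icc r e := by
        rw [← hjy]
        exact hitin j hj1 (by omega)
      have hye : y = e := le_antisymm hyJ0.2 (hK₀sub hy).1
      have h1'' : f^[1] y ∈ Icc r e := hitin 1 le_rfl hm'
      rw [Function.iterate_one, hye] at h1''
      linarith [h1''.2]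

private lemma reflect_iterate (f : ℝ → ℝ) (t : ℝ) :
    ∀ n, (fun x => -f (-x))^[n] (-t) = -(f^[n] t) := by
  intro n
  induction n with
  | zero => simp
  | succ n ih =>
    rw [Function.iterate_succ_apply', Function.iterate_succ_apply', ih]
    simp

theorem stmt_13 (a b : ℝ) (hab : a ≤ b) (f : ℝ → ℝ)
    (hf : ContinuousOn f (Set.Icc a b)) (hmaps : Set.MapsTo f (Set.Icc a b) (Set.Icc a b))
    (z : ℝ) (hz : z ∈ Set.Icc a b) (hfz : f z = z)
    (c : ℝ) (hc : c ∈ Set.Icc a b) (hcz : c ≠ z)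
    (hslope : (f c - z) / (c - z) > 1) (homega : OmegaLimitPt f c z) :
    TurbulentOn f (Set.Icc a b) ∧
      ∀ m : ℕ, 1 ≤ m → ∃ y ∈ Set.Icc a b, PeriodicPtOfPeriod f m y := by
  rcases lt_or_gt_of_ne hcz with hlt | hgt
  · -- c < z : use the reflected map
    have hcz' : c - z < 0 := by linarith
    have hmul : (f c - z) / (c - z) * (c - z) = f c - z :=
      div_mul_cancel₀ _ (ne_of_lt hcz')
    have hfc : f c < c := by nlinarith
    set g : ℝ → ℝ := fun x => -f (-x) with hg
    have hnegmem : ∀ x, x ∈ Icc (-b) (-a) → -x ∈ Icc a b := by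
      intro x hx
      exact ⟨by linarith [hx.2], by linarith [hx.1]⟩
    have hgcont : ContinuousOn g (Icc (-b) (-a)) := by
      apply ContinuousOn.neg
      exact hf.comp continuous_neg.continuousOn hnegmem
    have hgmaps : MapsTo g (Icc (-b) (-a)) (Icc (-b) (-a)) := by
      intro x hx
      have := hmaps (hnegmem x hx)
      exact ⟨by simp only [hg]; linarith [this.2], by simp only [hg]; linarith [this.1]⟩
    have hzmem : -z ∈ Icc (-b) (-a) := ⟨by linarith [hz.2], by linarith [hz.1]⟩
    have hgz : g (-z) = -z := by simp [hg, hfz]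
    have hcmem : -c ∈ Icc (-b) (-a) := ⟨by linarith [hc.2], by linarith [hc.1]⟩
    have hzc2 : -z < -c := by linarith
    have hgc : -c < g (-c) := by simp only [hg, neg_neg]; linarith
    have homega' : OmegaLimitPt g (-c) (-z) := by
      obtain ⟨φ, hφ, hlim⟩ := homega
      refine ⟨φ, hφ, ?_⟩
      have : (fun i => g^[φ i] (-c)) = fun i => -(f^[φ i] c) := by
        funext i
        exact reflect_iterate f c (φ i)
      rw [this]
      exact hlim.neg
    obtain ⟨hturb, hper⟩ := core (-b) (-a) g hgcont hgmaps (-z) hzmem hgz (-c) hcmem hzc2 hgc homega'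
    have hfg : ∀ x, f x = -g (-x) := by intro x; simp [hg]
    have hitfg : ∀ n t, f^[n] (-t) = -(g^[n] t) := by
      intro n t
      have := reflect_iterate g t n
      have hfun : (fun x => -g (-x)) = f := by funext x; rw [← hfg]
      rwa [hfun] at this
    constructor
    · obtain ⟨J₀, J₁, ⟨hJ₀sub, p₀, q₀, hpq₀, rfl⟩, ⟨hJ₁sub, p₁, q₁, hpq₁, rfl⟩, hsmall, hcov⟩ := hturb
      have hmem0 : ∀ x, x ∈ Icc (-q₀) (-p₀) → -x ∈ Icc p₀ q₀ := by
        intro x hx; exact ⟨by linarith [hx.2], by linarith [hx.1]⟩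
      have hmem1 : ∀ x, x ∈ Icc (-q₁) (-p₁) → -x ∈ Icc p₁ q₁ := by
        intro x hx; exact ⟨by linarith [hx.2], by linarith [hx.1]⟩
      refine ⟨Icc (-q₀) (-p₀), Icc (-q₁) (-p₁), ⟨?_, -q₀, -p₀, by linarith, rfl⟩,
        ⟨?_, -q₁, -p₁, by linarith, rfl⟩, ?_, ?_⟩
      · intro x hx
        have := hJ₀sub (hmem0 x hx)
        exact ⟨by linarith [this.2], by linarith [this.1]⟩
      · intro x hx
        have := hJ₁sub (hmem1 x hx)
        exact ⟨by linarith [this.2], by linarith [this.1]⟩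
      · intro x hx y hy
        have h1 := hsmall ⟨hmem0 x hx.1, hmem1 x hx.2⟩ ⟨hmem0 y hy.1, hmem1 y hy.2⟩
        linarith [neg_inj.mp h1]
      · rintro x hx
        have hx' : -x ∈ Icc p₀ q₀ ∪ Icc p₁ q₁ := by
          rcases hx with hx | hx
          · exact Or.inl (hmem0 x hx)
          · exact Or.inr (hmem1 x hx)
        obtain ⟨⟨w, hw, hgw⟩, ⟨w', hw', hgw'⟩⟩ := hcov hx'
        constructor
        · refine ⟨-w, ⟨by linarith [hw.2], by linarith [hw.1]⟩, ?_⟩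
          rw [hfg (-w)]
          simp only [neg_neg]
          rw [hgw]
          ring
        · refine ⟨-w', ⟨by linarith [hw'.2], by linarith [hw'.1]⟩, ?_⟩
          rw [hfg (-w')]
          simp only [neg_neg]
          rw [hgw']
          ring
    · intro m hm
      obtain ⟨y, hy, h1, h2⟩ := hper m hm
      refine ⟨-y, ⟨by linarith [hy.2], by linarith [hy.1]⟩, ?_, ?_⟩
      · rw [hitfg m y, h1]
      · intro j hj1 hj2 hj
        rw [hitfg j y] at hj
        exact h2 j hj1 hj2 (by linarith [neg_inj.mp hj])
  · have hcz' : 0 < c - z := by linarith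
    have hmul : (f c - z) / (c - z) * (c - z) = f c - z :=
      div_mul_cancel₀ _ (ne_of_gt hcz')
    have hfc : c < f c := by nlinarith
    exact core a b f hf hmaps z hz hfz c hc hgt hfc homega
end

section
/- Let I be a compact interval in ℝ and f : I → I a continuous map. Suppose there exist points d < z₀ in I and a fixed point z of f with z₀ ≤ z such that f²(d) = z₀, f²(z₀) = z₀, and for all x with d < x < z₀ one has f(x) > z and f²(x) < z₀, and there exists u₁ with d < u₁ < z₀ such that f²(u₁) = d. Then for every n ≥ 1, f has a periodic point of period 2n; in particular f has periodic points of all even periods. -/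
open Filter Set Function

/-- If a continuous map on an interval has an interval in its image, some compact
subinterval maps exactly onto it (case where preimages of endpoints are ordered). -/
lemma img_eq_aux {g : ℝ → ℝ} {c e r s : ℝ} (hce : c ≤ e) (hrs : r ≤ s)
    (hg : ContinuousOn g (Set.Icc c e)) (hgc : g c = r) (hge : g e = s) :
    ∃ p' q', c ≤ p' ∧ p' ≤ q' ∧ q' ≤ e ∧ g '' Set.Icc p' q' = Set.Icc r s := by
  have hS : IsClosed (Icc c e ∩ g ⁻¹' {s}) :=
    hg.preimage_isClosed_of_isClosed isClosed_Icc isClosed_singleton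
  have hSne : (Icc c e ∩ g ⁻¹' {s}).Nonempty := ⟨e, ⟨⟨hce, le_refl e⟩, hge⟩⟩
  have hSbdd : BddBelow (Icc c e ∩ g ⁻¹' {s}) := ⟨c, fun x hx => hx.1.1⟩
  set q' := sInf (Icc c e ∩ g ⁻¹' {s}) with hq'def
  have hq'mem : q' ∈ Icc c e ∩ g ⁻¹' {s} := hS.csInf_mem hSne hSbdd
  have hT : IsClosed (Icc c q' ∩ g ⁻¹' {r}) :=
    (hg.mono (Icc_subset_Icc le_rfl hq'mem.1.2)).preimage_isClosed_of_isClosed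
      isClosed_Icc isClosed_singleton
  have hTne : (Icc c q' ∩ g ⁻¹' {r}).Nonempty := ⟨c, ⟨⟨le_rfl, hq'mem.1.1⟩, hgc⟩⟩
  have hTbdd : BddAbove (Icc c q' ∩ g ⁻¹' {r}) := ⟨q', fun x hx => hx.1.2⟩
  set p' := sSup (Icc c q' ∩ g ⁻¹' {r}) with hp'def
  have hp'mem : p' ∈ Icc c q' ∩ g ⁻¹' {r} := hT.csSup_mem hTne hTbdd
  have hgp' : g p' = r := hp'mem.2
  have hgq' : g q' = s := hq'mem.2
  have hcp' : c ≤ p' := hp'mem.1.1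
  have hp'q' : p' ≤ q' := hp'mem.1.2
  have hq'e : q' ≤ e := hq'mem.1.2
  have hsubIcc : Icc p' q' ⊆ Icc c e := Icc_subset_Icc hcp' hq'e
  refine ⟨p', q', hcp', hp'q', hq'e, ?_⟩
  apply Set.Subset.antisymm
  · rintro y ⟨x, hx, rfl⟩
    constructor
    · by_contra hlt
      push_neg at hlt
      have hcont : ContinuousOn g (Icc x q') :=
        hg.mono (Icc_subset_Icc (hcp'.trans hx.1) hq'e)
      obtain ⟨w, hw, hgw⟩ := intermediate_value_Icc hx.2 hcont
        (by rw [hgq']; exact ⟨hlt.le, hrs⟩)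
      have hwT : w ∈ Icc c q' ∩ g ⁻¹' {r} :=
        ⟨⟨(hcp'.trans hx.1).trans hw.1, hw.2⟩, hgw⟩
      have : w ≤ p' := le_csSup hTbdd hwT
      have hxw : x = w := le_antisymm hw.1 (this.trans hx.1)
      rw [hxw, hgw] at hlt
      exact absurd hlt (lt_irrefl r)
    · by_contra hlt
      push_neg at hlt
      have hcont : ContinuousOn g (Icc p' x) :=
        hg.mono (Icc_subset_Icc hcp' (hx.2.trans hq'e))
      obtain ⟨w, hw, hgw⟩ := intermediate_value_Icc hx.1 hcont
        (by rw [hgp']; exact ⟨hrs, hlt.le⟩)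
      have hwS : w ∈ Icc c e ∩ g ⁻¹' {s} :=
        ⟨⟨hcp'.trans hw.1, (hw.2.trans hx.2).trans hq'e⟩, hgw⟩
      have : q' ≤ w := csInf_le hSbdd hwS
      have hxw : x = w := le_antisymm (le_trans hx.2 this) hw.2
      rw [hxw, hgw] at hlt
      exact absurd hlt (lt_irrefl s)
  · have := intermediate_value_Icc hp'q' (hg.mono hsubIcc)
    rw [hgp', hgq'] at this
    exact this

/-- Covering lemma: if `Icc r s ⊆ g '' Icc p q` then some compact subinterval of
`[p,q]` maps exactly onto `[r,s]`. -/
lemma img_eq {g : ℝ → ℝ} {p q r s : ℝ} (hpq : p ≤ q) (hrs : r ≤ s)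
    (hg : ContinuousOn g (Set.Icc p q)) (hr : Set.Icc r s ⊆ g '' Set.Icc p q) :
    ∃ p' q', p ≤ p' ∧ p' ≤ q' ∧ q' ≤ q ∧ g '' Set.Icc p' q' = Set.Icc r s := by
  obtain ⟨c, hc, hgc⟩ := hr (left_mem_Icc.2 hrs)
  obtain ⟨e, he, hge⟩ := hr (right_mem_Icc.2 hrs)
  rcases le_total c e with h | h
  · obtain ⟨p', q', h1, h2, h3, h4⟩ :=
      img_eq_aux h hrs (hg.mono (Icc_subset_Icc hc.1 he.2)) hgc hge
    exact ⟨p', q', hc.1.trans h1, h2, h3.trans he.2, h4⟩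
  · have hmap : MapsTo (fun x => c + e - x) (Icc e c) (Icc e c) := by
      intro x hx; simp only [mem_Icc] at hx ⊢; constructor <;> linarith [hx.1, hx.2]
    have hcont : ContinuousOn (fun x => g (c + e - x)) (Icc e c) :=
      (hg.mono (Icc_subset_Icc he.1 hc.2)).comp
        (Continuous.continuousOn (by continuity)) hmap
    obtain ⟨p', q', h1, h2, h3, h4⟩ := img_eq_aux h hrs hcont
      (by simp [hgc]) (by simp [hge])
    refine ⟨c + e - q', c + e - p', by linarith [he.1], by linarith, by linarith [hc.2], ?_⟩
    have himg : (fun x => c + e - x) '' Icc p' q' = Icc (c + e - q') (c + e - p') :=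
      Set.image_const_sub_Icc (c + e) p' q'
    rw [← himg, ← Set.image_comp]
    exact h4

/-- A continuous map whose image of a compact interval covers the interval has a
fixed point there. -/
lemma fix_of_cover {g : ℝ → ℝ} {p q : ℝ} (hg : ContinuousOn g (Set.Icc p q))
    (hc : Set.Icc p q ⊆ g '' Set.Icc p q) (hpq : p ≤ q) : ∃ y ∈ Set.Icc p q, g y = y := by
  obtain ⟨c, hcm, hgc⟩ := hc (left_mem_Icc.2 hpq)
  obtain ⟨e, hem, hge⟩ := hc (right_mem_Icc.2 hpq)
  have hcont : ContinuousOn (fun x => g x - x) (Icc p q) := hg.sub continuousOn_id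
  have h1 : g c - c ≤ 0 := by rw [hgc]; linarith [hcm.1]
  have h2 : 0 ≤ g e - e := by rw [hge]; linarith [hem.2]
  rcases le_total c e with h | h
  · obtain ⟨y, hy, hgy⟩ := intermediate_value_Icc h
      (hcont.mono (Icc_subset_Icc hcm.1 hem.2)) ⟨h1, h2⟩
    exact ⟨y, Icc_subset_Icc hcm.1 hem.2 hy, by simp at hgy; linarith⟩
  · obtain ⟨y, hy, hgy⟩ := intermediate_value_Icc' h
      (hcont.mono (Icc_subset_Icc hem.1 hcm.2)) ⟨h1, h2⟩
    exact ⟨y, Icc_subset_Icc hem.1 hcm.2 hy, by simp at hgy; linarith⟩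

/-- Iterated covering: pulling back a target interval through `k+1` steps inside
`[d,u₁]`. -/
lemma chain {F : ℝ → ℝ} {d u₁ z₀ : ℝ} (hdu : d ≤ u₁) (huz : u₁ ≤ z₀)
    (hF : ContinuousOn F (Set.Icc d u₁))
    (hcov : Set.Icc d z₀ ⊆ F '' Set.Icc d u₁) :
    ∀ k : ℕ, ∀ r s : ℝ, d ≤ r → r ≤ s → s ≤ z₀ →
      ∃ p' q', d ≤ p' ∧ p' ≤ q' ∧ q' ≤ u₁ ∧ F^[k+1] '' Set.Icc p' q' = Set.Icc r s ∧
        ∀ x ∈ Set.Icc p' q', ∀ i ≤ k, F^[i] x ∈ Set.Icc d u₁ := by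
  intro k
  induction k with
  | zero =>
    intro r s hdr hrs hsz
    obtain ⟨p', q', h1, h2, h3, h4⟩ :=
      img_eq hdu hrs hF ((Icc_subset_Icc hdr hsz).trans hcov)
    refine ⟨p', q', h1, h2, h3, by simpa using h4, ?_⟩
    intro x hx i hi
    rw [Nat.le_zero.mp hi]
    exact Icc_subset_Icc h1 h3 hx
  | succ k ih =>
    intro r s hdr hrs hsz
    obtain ⟨p₁, q₁, h1, h2, h3, h4, h5⟩ := ih r s hdr hrs hsz
    obtain ⟨p', q', g1, g2, g3, g4⟩ :=
      img_eq hdu h2 hF ((Icc_subset_Icc h1 (h3.trans huz)).trans hcov)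
    refine ⟨p', q', g1, g2, g3, ?_, ?_⟩
    · rw [Function.iterate_succ F (k+1), Set.image_comp, g4, h4]
    · intro x hx i hi
      cases i with
      | zero => simpa using Icc_subset_Icc g1 g3 hx
      | succ i =>
        rw [Function.iterate_succ_apply]
        have hFx : F x ∈ Icc p₁ q₁ := g4 ▸ mem_image_of_mem F hx
        exact h5 (F x) hFx i (Nat.succ_le_succ_iff.mp hi)

/-- From a point of least period `n` for `f²` whose orbit stays in `(d, z₀)`,
where odd iterates of `f` land above `z ≥ z₀`, we get least period `2n` for `f`. -/
lemma final_period {f : ℝ → ℝ} {d z₀ z : ℝ} (hz₀z : z₀ ≤ z)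
    (hbetween : ∀ x : ℝ, d < x → x < z₀ → z < f x)
    {n : ℕ} (hn : 1 ≤ n) {y : ℝ}
    (hper : (f^[2])^[n] y = y)
    (horb : ∀ k, k < n → d < (f^[2])^[k] y ∧ (f^[2])^[k] y < z₀)
    (hleast : ∀ k, 0 < k → k < n → (f^[2])^[k] y ≠ y) :
    PeriodicPtOfPeriod f (2 * n) y := by
  have hy0 := horb 0 hn
  simp only [Function.iterate_zero, id_eq] at hy0
  constructor
  · rw [Function.iterate_mul]; exact hper
  · intro j hj0 hjn
    rcases Nat.even_or_odd j with ⟨k, hk⟩ | ⟨k, hk⟩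
    · have hk2 : j = 2 * k := by omega
      intro hcon
      rw [hk2, Function.iterate_mul] at hcon
      exact hleast k (by omega) (by omega) hcon
    · intro hcon
      have h1 : f^[2*k+1] y = f ((f^[2])^[k] y) := by
        rw [Function.iterate_succ_apply', Function.iterate_mul]
      have hkn : k < n := by omega
      have hz' := hbetween _ (horb k hkn).1 (horb k hkn).2
      rw [hk, h1] at hcon
      linarith [hy0.2]

theorem stmt_16 (a b : ℝ) (hab : a ≤ b) (f : ℝ → ℝ)
    (hf : ContinuousOn f (Set.Icc a b)) (hmaps : Set.MapsTo f (Set.Icc a b) (Set.Icc a b))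
    (d z₀ z : ℝ) (hd : d ∈ Set.Icc a b) (hz₀ : z₀ ∈ Set.Icc a b) (hdz₀ : d < z₀)
    (hz : z ∈ Set.Icc a b) (hfz : f z = z) (hz₀z : z₀ ≤ z)
    (hfd : f^[2] d = z₀) (hfz₀ : f^[2] z₀ = z₀)
    (hbetween : ∀ x : ℝ, d < x → x < z₀ → z < f x ∧ f^[2] x < z₀)
    (hu : ∃ u₁ : ℝ, d < u₁ ∧ u₁ < z₀ ∧ f^[2] u₁ = d) :
    ∀ n : ℕ, 1 ≤ n → ∃ y ∈ Set.Icc a b, PeriodicPtOfPeriod f (2 * n) y := by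
  obtain ⟨u₁, hdu₁, hu₁z₀, hFu₁⟩ := hu
  have hsub : Set.Icc d z₀ ⊆ Set.Icc a b := Set.Icc_subset_Icc hd.1 hz₀.2
  have hmaps2 : Set.MapsTo (f^[2]) (Set.Icc a b) (Set.Icc a b) := by
    intro x hx
    rw [show f^[2] x = f (f x) from rfl]
    exact hmaps (hmaps hx)
  have hFcont : ContinuousOn (f^[2]) (Set.Icc a b) := hf.iterate hmaps 2
  have hFdz : ContinuousOn (f^[2]) (Set.Icc d z₀) := hFcont.mono hsub
  have hFdu : ContinuousOn (f^[2]) (Set.Icc d u₁) :=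
    hFdz.mono (Icc_subset_Icc le_rfl hu₁z₀.le)
  have hFuz : ContinuousOn (f^[2]) (Set.Icc u₁ z₀) :=
    hFdz.mono (Icc_subset_Icc hdu₁.le le_rfl)
  have hcov₀ : Set.Icc d z₀ ⊆ f^[2] '' Set.Icc d u₁ := by
    have h := intermediate_value_Icc' hdu₁.le hFdu
    rw [hFu₁, hfd] at h; exact h
  have hcov₁ : Set.Icc d z₀ ⊆ f^[2] '' Set.Icc u₁ z₀ := by
    have h := intermediate_value_Icc hu₁z₀.le hFuz
    rw [hFu₁, hfz₀] at h; exact h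
  have hbet : ∀ x : ℝ, d < x → x < z₀ → z < f x := fun x h1 h2 => (hbetween x h1 h2).1
  intro n hn
  rcases eq_or_lt_of_le hn with h1 | h2
  · -- n = 1
    obtain ⟨y, hy, hgy⟩ := fix_of_cover hFdu
      ((Icc_subset_Icc le_rfl hu₁z₀.le).trans hcov₀) hdu₁.le
    have hyd : d < y := by
      rcases lt_or_eq_of_le hy.1 with h | h
      · exact h
      · exfalso; rw [← h, hfd] at hgy; linarith
    have hyu : y < u₁ := by
      rcases lt_or_eq_of_le hy.2 with h | h
      · exact h
      · exfalso; rw [h, hFu₁] at hgy; linarith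
    refine ⟨y, hsub ⟨hy.1, hy.2.trans hu₁z₀.le⟩, ?_⟩
    rw [← h1]
    exact final_period hz₀z hbet le_rfl (by simpa using hgy)
      (fun k hk => by
        interval_cases k
        simpa using ⟨hyd, hyu.trans hu₁z₀⟩)
      (fun k hk0 hk1 => absurd (by omega : k < 1) (by omega))
  · -- 2 ≤ n
    obtain ⟨m, hm⟩ : ∃ m, n = m + 2 := ⟨n - 2, by omega⟩
    obtain ⟨p₁, q₁, h1, h2, h3, h4, h5⟩ :=
      chain hdu₁.le hu₁z₀.le hFdu hcov₀ m u₁ z₀ hdu₁.le hu₁z₀.le le_rfl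
    obtain ⟨p₂, q₂, g1, g2, g3, g4⟩ :=
      img_eq hu₁z₀.le h2 hFuz ((Icc_subset_Icc h1 (h3.trans hu₁z₀.le)).trans hcov₁)
    have hiter : (f^[2])^[n] '' Set.Icc p₂ q₂ = Set.Icc u₁ z₀ := by
      rw [hm, Function.iterate_succ (f^[2]) (m+1), Set.image_comp, g4, h4]
    have hsub2 : Set.Icc p₂ q₂ ⊆ Set.Icc a b :=
      (Icc_subset_Icc (hdu₁.le.trans g1) g3).trans hsub
    have hcontn : ContinuousOn ((f^[2])^[n]) (Set.Icc p₂ q₂) :=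
      (hFcont.iterate hmaps2 n).mono hsub2
    obtain ⟨y, hy, hgy⟩ := fix_of_cover hcontn
      (by rw [hiter]; exact Icc_subset_Icc g1 g3) g2
    have hyI : y ∈ Set.Icc u₁ z₀ := Icc_subset_Icc g1 g3 hy
    have hFy : f^[2] y ∈ Set.Icc p₁ q₁ := g4 ▸ mem_image_of_mem _ hy
    have horb' : ∀ i, 1 ≤ i → i < n → (f^[2])^[i] y ∈ Set.Icc d u₁ := by
      intro i hi1 hin
      obtain ⟨j, rfl⟩ : ∃ j, i = j + 1 := ⟨i - 1, by omega⟩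
      rw [Function.iterate_succ_apply]
      exact h5 (f^[2] y) hFy j (by omega)
    have hyne : y ≠ z₀ := by
      intro h
      have hq : f^[2] y ≤ q₁ := hFy.2
      rw [h, hfz₀] at hq
      have : q₁ ≤ u₁ := h3
      linarith
    have hnz : ∀ k, k ≤ n → (f^[2])^[k] y ≠ z₀ := by
      intro k hk hc
      apply hyne
      have h' : (f^[2])^[n] y = z₀ := by
        conv_lhs => rw [show n = (n - k) + k from (Nat.sub_add_cancel hk).symm]
        rw [Function.iterate_add_apply, hc, Function.iterate_fixed hfz₀]
      rw [hgy] at h'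
      exact h'
    have hnd : ∀ k, k < n → (f^[2])^[k] y ≠ d := by
      intro k hk hc
      apply hnz (k+1) (by omega)
      rw [Function.iterate_succ_apply', hc, hfd]
    have horb : ∀ k, k < n → d < (f^[2])^[k] y ∧ (f^[2])^[k] y < z₀ := by
      intro k hk
      rcases Nat.eq_zero_or_pos k with rfl | hk1
      · simp only [Function.iterate_zero, id_eq]
        refine ⟨hdu₁.trans_le hyI.1, lt_of_le_of_ne hyI.2 ?_⟩
        have := hnz 0 (by omega)
        simpa using this
      · have h := horb' k hk1 hk
        exact ⟨lt_of_le_of_ne h.1 (Ne.symm (hnd k hk)), lt_of_le_of_lt h.2 hu₁z₀⟩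
    have hleast : ∀ k, 0 < k → k < n → (f^[2])^[k] y ≠ y := by
      intro k hk0 hkn hc
      have h := (horb' k hk0 hkn).2
      rw [hc] at h
      have hyu : y = u₁ := le_antisymm h hyI.1
      apply hnd 1 (by omega)
      rw [Function.iterate_one, hyu, hFu₁]
    exact ⟨y, hsub2 hy, final_period hz₀z hbet hn hgy horb hleast⟩
end
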